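/- Let G be a connected graph and X a vertex cover of G such that G[X] has at most m ≥ 1 connected components. Then there exists a connected vertex cover X' of G with X ⊆ X' and |X'| ≤ |X| + m − 1. -/

import Mathlib

/-- `X` is a vertex cover of `G`: every edge has at least one endpoint in `X`. -/
def IsVertexCover {V : Type*} (G : SimpleGraph V) (X : Set V) : Prop :=
  ∀ ⦃u v : V⦄, G.Adj u v → u ∈ X ∨ v ∈ X

/-- `X` is a connected vertex cover of `G`. -/
def IsConnectedVertexCover {V : Type*} (G : SimpleGraph V) (X : Set V) : Prop :=
  IsVertexCover G X ∧ (G.induce X).Connected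

section
open SimpleGraph

/-- Along a walk between vertices of `X` in different components of `G[X]`, there is a
vertex `w ∉ X` adjacent to two `X`-vertices in different components of `G[X]`. -/
private lemma key_walk {V : Type} (G : SimpleGraph V) (X : Set V)
    (hvc : _root_.IsVertexCover G X) :
    ∀ (n : ℕ) (a b : V) (ha : a ∈ X) (hb : b ∈ X) (p : G.Walk a b), p.length ≤ n →
    ¬ (G.induce X).Reachable ⟨a, ha⟩ ⟨b, hb⟩ →
    ∃ (u w v : V) (hu : u ∈ X) (hv : v ∈ X), w ∉ X ∧ G.Adj u w ∧ G.Adj w v ∧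
      ¬ (G.induce X).Reachable ⟨u, hu⟩ ⟨v, hv⟩ := by
  intro n
  induction n with
  | zero =>
    intro a b ha hb p hlen hr
    cases p with
    | nil => exact absurd (Reachable.refl _) hr
    | cons h q => simp [Walk.length_cons] at hlen
  | succ n ih =>
    intro a b ha hb p hlen hr
    cases p with
    | nil => exact absurd (Reachable.refl _) hr
    | @cons _ c _ h q =>
      by_cases hc : c ∈ X
      · -- edge a-c stays inside X, recurse on q
        have hadj : (G.induce X).Adj ⟨a, ha⟩ ⟨c, hc⟩ := by
          simp [SimpleGraph.comap_adj, h]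
        have hr' : ¬ (G.induce X).Reachable ⟨c, hc⟩ ⟨b, hb⟩ := fun hrc =>
          hr (hadj.reachable.trans hrc)
        have hlen' : q.length ≤ n := by
          simp [Walk.length_cons] at hlen; omega
        exact ih c b hc hb q hlen' hr'
      · cases q with
        | nil => exact absurd hb hc
        | @cons _ d _ h2 r =>
          have hd : d ∈ X := (hvc h2).resolve_left hc
          by_cases hre : (G.induce X).Reachable ⟨a, ha⟩ ⟨d, hd⟩
          · have hr' : ¬ (G.induce X).Reachable ⟨d, hd⟩ ⟨b, hb⟩ := fun hrd =>
              hr (hre.trans hrd)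
            have hlen' : r.length ≤ n := by
              simp [Walk.length_cons] at hlen; omega
            exact ih d b hd hb r hlen' hr'
          · exact ⟨a, c, d, ha, hd, hc, h, h2, hre⟩

private lemma card_lt {V : Type} [Fintype V] (G : SimpleGraph V) (X : Set V)
    (u w v : V) (hu : u ∈ X) (hv : v ∈ X) (hw : w ∉ X)
    (h1 : G.Adj u w) (h2 : G.Adj w v)
    (hnr : ¬ (G.induce X).Reachable ⟨u, hu⟩ ⟨v, hv⟩) :
    Nat.card (G.induce (insert w X)).ConnectedComponent <
      Nat.card (G.induce X).ConnectedComponent := by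
  classical
  set Y : Set V := insert w X with hY
  have hsub : X ⊆ Y := Set.subset_insert w X
  have huY : u ∈ Y := hsub hu
  have hvY : v ∈ Y := hsub hv
  have hwY : w ∈ Y := Set.mem_insert w X
  let φ : G.induce X →g G.induce Y := (G.induceHomOfLE hsub).toHom
  let f : (G.induce X).ConnectedComponent → (G.induce Y).ConnectedComponent :=
    fun C => C.map φ
  haveI : Finite ↥X := Subtype.finite
  haveI : Finite ↥Y := Subtype.finite
  haveI : Finite (G.induce X).ConnectedComponent := Quot.finite _
  haveI : Finite (G.induce Y).ConnectedComponent := Quot.finite _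
  -- f is surjective
  have hwu : (G.induce Y).Adj ⟨u, huY⟩ ⟨w, hwY⟩ := by
    simp [SimpleGraph.comap_adj, h1]
  have hwv : (G.induce Y).Adj ⟨w, hwY⟩ ⟨v, hvY⟩ := by
    simp [SimpleGraph.comap_adj, h2]
  have hsurj : Function.Surjective f := by
    intro C
    obtain ⟨⟨y, hy⟩, rfl⟩ := Quot.exists_rep C
    rcases hy with hyw | hyX
    · subst hyw
      refine ⟨(G.induce X).connectedComponentMk ⟨u, hu⟩, ?_⟩
      show ((G.induce X).connectedComponentMk ⟨u, hu⟩).map φ = _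
      rw [ConnectedComponent.map_mk]
      exact ConnectedComponent.sound hwu.reachable
    · exact ⟨(G.induce X).connectedComponentMk ⟨y, hyX⟩, rfl⟩
  -- f is not injective
  have hfeq : f ((G.induce X).connectedComponentMk ⟨u, hu⟩) =
      f ((G.induce X).connectedComponentMk ⟨v, hv⟩) := by
    show ((G.induce X).connectedComponentMk ⟨u, hu⟩).map φ =
      ((G.induce X).connectedComponentMk ⟨v, hv⟩).map φ
    rw [ConnectedComponent.map_mk, ConnectedComponent.map_mk]
    exact ConnectedComponent.sound (hwu.reachable.trans hwv.reachable)
  have hne : (G.induce X).connectedComponentMk ⟨u, hu⟩ ≠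
      (G.induce X).connectedComponentMk ⟨v, hv⟩ := fun h =>
    hnr (ConnectedComponent.exact h)
  have hle := Nat.card_le_card_of_surjective f hsurj
  refine lt_of_le_of_ne hle fun hcard => ?_
  have hbij : Function.Bijective f :=
    (Nat.bijective_iff_surjective_and_card f).mpr ⟨hsurj, hcard.symm⟩
  exact hne (hbij.injective hfeq)

private lemma main_aux {V : Type} [Fintype V] (G : SimpleGraph V) (hG : G.Connected) :
    ∀ (n : ℕ) (X : Set V), X.Nonempty → _root_.IsVertexCover G X →
      Nat.card (G.induce X).ConnectedComponent ≤ n →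
      ∃ X' : Set V, X ⊆ X' ∧ IsConnectedVertexCover G X' ∧
        X'.ncard ≤ X.ncard + n - 1 := by
  classical
  intro n
  induction n with
  | zero =>
    intro X hX hvc hc
    exfalso
    haveI : Nonempty ↥X := hX.to_subtype
    haveI : Finite ↥X := Subtype.finite
    haveI : Finite (G.induce X).ConnectedComponent := Quot.finite _
    haveI : Nonempty (G.induce X).ConnectedComponent :=
      ⟨(G.induce X).connectedComponentMk (Classical.arbitrary _)⟩
    have : 0 < Nat.card (G.induce X).ConnectedComponent := Nat.card_pos
    omega
  | succ n ih =>
    intro X hX hvc hc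
    haveI : Nonempty ↥X := hX.to_subtype
    haveI : Finite ↥X := Subtype.finite
    haveI : Finite (G.induce X).ConnectedComponent := Quot.finite _
    by_cases hconn : (G.induce X).Connected
    · exact ⟨X, subset_rfl, ⟨hvc, hconn⟩, by omega⟩
    · have hnp : ¬ (G.induce X).Preconnected := fun h => hconn ⟨h⟩
      rw [SimpleGraph.Preconnected] at hnp
      push_neg at hnp
      obtain ⟨a, b, hab⟩ := hnp
      obtain ⟨p⟩ := hG.preconnected a.1 b.1
      obtain ⟨u, w, v, hu, hv, hw, h1, h2, hnr⟩ :=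
        key_walk G X hvc p.length a.1 b.1 a.2 b.2 p le_rfl (by simpa using hab)
      have hlt := card_lt G X u w v hu hv hw h1 h2 hnr
      -- the graph is disconnected, so it has at least 2 components
      have h2comp : 1 < Nat.card (G.induce X).ConnectedComponent := by
        rw [Finite.one_lt_card_iff_nontrivial]
        exact ⟨_, _, fun h => hnr (ConnectedComponent.exact h)⟩
      have hY : Nat.card (G.induce (insert w X)).ConnectedComponent ≤ n := by omega
      obtain ⟨X', hsub, hcvc, hcard⟩ := ih (insert w X) ⟨w, Set.mem_insert w X⟩
        (fun x y hxy => (hvc hxy).imp (Set.mem_insert_of_mem w) (Set.mem_insert_of_mem w))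
        hY
      refine ⟨X', (Set.subset_insert w X).trans hsub, hcvc, ?_⟩
      have hins : (insert w X).ncard ≤ X.ncard + 1 := Set.ncard_insert_le w X
      omega

end

/-- A vertex cover whose induced subgraph has at most `m ≥ 1` connected components
can be completed to a connected vertex cover by adding at most `m - 1` vertices. -/
theorem stmt7 {V : Type} [Fintype V] (G : SimpleGraph V) (hG : G.Connected)
    (X : Set V) (hX : X.Nonempty) (hvc : IsVertexCover G X)
    (m : ℕ) (hm : 1 ≤ m)
    (hcomp : Nat.card (G.induce X).ConnectedComponent ≤ m) :
    ∃ X' : Set V, X ⊆ X' ∧ IsConnectedVertexCover G X' ∧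
      X'.ncard ≤ X.ncard + m - 1 := by
  exact main_aux G hG m X hX hvc hcomp
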